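/- Let λ = (λ₁,…,λ_s) be a partition of n with s ≥ 2, and let 2 ≤ i ≤ s be such that either i = s or λ_i > λ_{i+1}. Let λ' be λ with its i-th part decreased by 1 (deleting it if it becomes 0). Then the eigenvalues η of the perfect matching derangement graph, defined by η_μ = (-1)^{|μ|-μ₁} f(μ), satisfy η_λ = −η_{λ'} + (-1)^{s+1}(2λ_i + s − i − 1) η_{λ − 1̂} + (-1)^{s+1}(2λ_i + s − i − 2) η_{λ' − 1̂}. -/

import Mathlib

/-- The odd double factorial `(2k-1)!! = 1 * 3 * ... * (2k-1)`, with `odf 0 = 1`. -/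
def odf (k : Nat) : Int := ∏ j ∈ Finset.Icc 1 k, (2 * (j : Int) - 1)

/-- Subtract `k` from every part, deleting parts that become zero. -/
def subHat (k : Nat) (l : List Nat) : List Nat :=
  (l.map (fun x => x - k)).filter (fun x => x ≠ 0)

/-- `l` is a partition: a non-increasing list of positive integers. -/
def IsPartition (l : List Nat) : Prop := l.Chain' (· ≥ ·) ∧ ∀ x ∈ l, 0 < x

/-- Increase the `i`-th part (1-based indexing). -/
def upAt (i : Nat) (l : List Nat) : List Nat := l.set (i - 1) (l.getD (i - 1) 0 + 1)

/-- Decrease the `j`-th part (1-based indexing), deleting it if it becomes zero. -/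
def downAt (j : Nat) (l : List Nat) : List Nat :=
  (l.set (j - 1) (l.getD (j - 1) 0 - 1)).filter (fun x => x ≠ 0)

lemma odf_zero : odf 0 = 1 := by simp [odf]

lemma odf_succ (k : ℕ) : odf (k+1) = odf k * (2*(k:ℤ)+1) := by
  rw [odf, odf, Finset.prod_Icc_succ_top (by omega)]
  push_cast; ring

lemma odf_one : odf 1 = 1 := by
  rw [show (1:ℕ) = 0+1 from rfl, odf_succ, odf_zero]; ring

lemma isPartition_iff (l : List ℕ) :
    IsPartition l ↔ l.Pairwise (· ≥ ·) ∧ ∀ x ∈ l, 0 < x := by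
  unfold IsPartition
  simp only [List.Chain', List.isChain_iff_pairwise]

lemma subHat_nil (k : ℕ) : subHat k [] = [] := rfl

lemma subHat_cons_le {x k : ℕ} (h : x ≤ k) (l : List ℕ) : subHat k (x :: l) = subHat k l := by
  simp [subHat, List.filter_cons, Nat.sub_eq_zero_of_le h]

lemma subHat_cons_lt {x k : ℕ} (h : k < x) (l : List ℕ) :
    subHat k (x :: l) = (x - k) :: subHat k l := by
  simp only [subHat, List.map_cons, List.filter_cons]
  have : x - k ≠ 0 := by omega
  simp [this]

lemma subHat_append (k : ℕ) (l₁ l₂ : List ℕ) :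
    subHat k (l₁ ++ l₂) = subHat k l₁ ++ subHat k l₂ := by
  simp [subHat, List.filter_append]

lemma subHat_eq_map {k : ℕ} {l : List ℕ} (h : ∀ x ∈ l, k < x) :
    subHat k l = l.map (fun x => x - k) := by
  rw [subHat, List.filter_eq_self]
  intro a ha
  simp only [List.mem_map] at ha
  obtain ⟨x, hx, rfl⟩ := ha
  have := h x hx
  simp; omega

lemma subHat_zero {l : List ℕ} (h : ∀ x ∈ l, 0 < x) : subHat 0 l = l := by
  rw [subHat_eq_map h]
  simp

lemma subHat_subHat (k k' : ℕ) (l : List ℕ) :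
    subHat k' (subHat k l) = subHat (k + k') l := by
  induction l with
  | nil => rfl
  | cons x l ih =>
    rcases le_or_gt x k with h | h
    · rw [subHat_cons_le h, subHat_cons_le (by omega), ih]
    · rcases le_or_gt x (k + k') with h2 | h2
      · rw [subHat_cons_lt h, subHat_cons_le (by omega), subHat_cons_le h2, ih]
      · rw [subHat_cons_lt h, subHat_cons_lt (show k' < x - k by omega),
          subHat_cons_lt h2, ih]
        congr 1
        omega

lemma subHat_eq_nil {k : ℕ} {l : List ℕ} (h : ∀ x ∈ l, x ≤ k) : subHat k l = [] := by
  induction l with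
  | nil => rfl
  | cons x l ih =>
    rw [subHat_cons_le (h x (by simp)), ih]
    intro y hy; exact h y (by simp [hy])

lemma IsPartition.subHat {l : List ℕ} (h : IsPartition l) (k : ℕ) :
    IsPartition (subHat k l) := by
  rw [isPartition_iff] at h ⊢
  constructor
  · apply List.Pairwise.sublist List.filter_sublist
    rw [List.pairwise_map]
    exact h.1.imp (fun hab => Nat.sub_le_sub_right hab k)
  · intro x hx
    rw [_root_.subHat, List.mem_filter] at hx
    have := hx.2
    simp at this
    omega

lemma subHat_pos {l : List ℕ} (k : ℕ) : ∀ x ∈ subHat k l, 0 < x := by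
  intro x hx
  rw [subHat, List.mem_filter] at hx
  have := hx.2
  simp at this
  omega

lemma subHat_sum_le (k : ℕ) (l : List ℕ) : (subHat k l).sum ≤ l.sum := by
  induction l with
  | nil => simp [subHat_nil]
  | cons x l ih =>
    rcases le_or_gt x k with h | h
    · rw [subHat_cons_le h]; simp; omega
    · rw [subHat_cons_lt h]; simp; omega

lemma subHat_one_sum {l : List ℕ} (h : ∀ x ∈ l, 0 < x) :
    (subHat 1 l).sum + l.length = l.sum := by
  induction l with
  | nil => simp [subHat_nil]
  | cons x l ih =>
    have hx : 0 < x := h x (by simp)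
    have ih' := ih (fun y hy => h y (by simp [hy]))
    rcases le_or_gt x 1 with h1 | h1
    · rw [subHat_cons_le h1]; simp; omega
    · rw [subHat_cons_lt h1]; simp at ih' ⊢; omega

lemma length_le_sum {l : List ℕ} (h : ∀ x ∈ l, 0 < x) : l.length ≤ l.sum := by
  induction l with
  | nil => simp
  | cons x l ih =>
    have := h x (by simp)
    have := ih (fun y hy => h y (by simp [hy]))
    simp; omega

lemma head_add_length_le {l : List ℕ} (h : ∀ x ∈ l, 0 < x) :
    l.headD 0 + l.length ≤ l.sum + 1 := by
  cases l with
  | nil => simp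
  | cons x l =>
    have := length_le_sum (l := l) (fun y hy => h y (by simp [hy]))
    simp; omega

lemma subHat_one_headD {l : List ℕ} (h : IsPartition l) :
    (subHat 1 l).headD 0 = l.headD 0 - 1 := by
  rw [isPartition_iff] at h
  cases l with
  | nil => simp [subHat_nil]
  | cons x l =>
    rcases le_or_gt x 1 with h1 | h1
    · rw [subHat_cons_le h1, subHat_eq_nil]
      · simp; omega
      · intro y hy
        have := List.rel_of_pairwise_cons h.1 hy
        omega
    · rw [subHat_cons_lt h1]; simp

lemma eq_take_cons_drop {l : List ℕ} {n : ℕ} (h : n < l.length) :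
    l = l.take n ++ l.getD n 0 :: l.drop (n+1) := by
  conv_lhs => rw [← List.take_append_drop n l]
  rw [List.drop_eq_getElem_cons h, List.getD_eq_getElem _ _ h]

lemma set_append_len (a b : List ℕ) (x v : ℕ) :
    (a ++ x :: b).set a.length v = a ++ v :: b := by
  induction a with
  | nil => simp
  | cons y a ih => simp [ih]

lemma getD_append_len (a b : List ℕ) (x d : ℕ) :
    (a ++ x :: b).getD a.length d = x := by
  induction a with
  | nil => simp
  | cons y a ih => simpa using ih

lemma downAt_decomp {a b : List ℕ} {x i : ℕ} (hi : a.length = i - 1)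
    (ha : ∀ y ∈ a, 0 < y) (hb : ∀ y ∈ b, 0 < y) :
    downAt i (a ++ x :: b) = a ++ (if x ≤ 1 then b else (x-1) :: b) := by
  unfold downAt
  rw [← hi, getD_append_len, set_append_len, List.filter_append]
  have hfa : a.filter (fun y => y ≠ 0) = a := by
    rw [List.filter_eq_self]; intro y hy; simpa using (ha y hy).ne'
  have hfb : b.filter (fun y => y ≠ 0) = b := by
    rw [List.filter_eq_self]; intro y hy; simpa using (hb y hy).ne'
  rw [hfa, List.filter_cons]
  rcases le_or_gt x 1 with h1 | h1
  · have : (x - 1) = 0 := by omega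
    simp [this, h1]
    intro y hy; exact (hb y hy).ne'
  · have hne : (x - 1) ≠ 0 := by omega
    simp [hne, Nat.not_le.mpr h1]
    intro y hy; exact (hb y hy).ne'

lemma downAt_subHat_comm {a b : List ℕ} {x i k : ℕ} (hi : a.length = i - 1)
    (hk : 1 ≤ k) (hx : k < x) (ha : ∀ y ∈ a, k < y) (hb : ∀ y ∈ b, 0 < y) :
    downAt i (subHat k (a ++ x :: b)) = subHat k (downAt i (a ++ x :: b)) := by
  have ha0 : ∀ y ∈ a, 0 < y := fun y hy => lt_of_le_of_lt (Nat.zero_le k) (ha y hy)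
  have hamap : ∀ y ∈ a.map (fun z => z - k), 0 < y := by
    intro y hy
    simp only [List.mem_map] at hy
    obtain ⟨z, hz, rfl⟩ := hy
    have := ha z hz; omega
  rw [subHat_append, subHat_eq_map ha, subHat_cons_lt hx]
  rw [downAt_decomp (by simpa using hi) hamap (subHat_pos k)]
  rw [downAt_decomp hi ha0 hb]
  rcases le_or_gt x (k+1) with h1 | h1
  · rw [if_pos (show x - k ≤ 1 by omega), if_neg (show ¬ x ≤ 1 by omega)]
    rw [subHat_append, subHat_eq_map ha, subHat_cons_le (by omega)]
  · rw [if_neg (show ¬ x - k ≤ 1 by omega), if_neg (show ¬ x ≤ 1 by omega)]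
    rw [subHat_append, subHat_eq_map ha, subHat_cons_lt (show k < x - 1 by omega)]
    congr 2
    omega

lemma choose_id (n j : ℕ) : ((n:ℤ) - (j:ℤ)) * (n.choose j : ℤ) = (n:ℤ) * ((n-1).choose j : ℤ) := by
  rcases Nat.eq_zero_or_pos n with rfl | hn
  · rcases Nat.eq_zero_or_pos j with rfl | hj
    · simp
    · rw [Nat.choose_eq_zero_of_lt hj]
      simp
  · rcases le_or_gt j n with hj | hj
    · have h1 : n * ((n-1).choose j) = n.choose (j+1) * (j+1) := by
        have h := Nat.add_one_mul_choose_eq (n-1) j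
        rw [show n - 1 + 1 = n by omega] at h
        exact h
      have h2 : n.choose (j+1) * (j+1) = n.choose j * (n - j) := Nat.choose_succ_right_eq n j
      have key : n.choose j * (n - j) = n * ((n-1).choose j) := by omega
      have key2 : ((n.choose j * (n - j) : ℕ) : ℤ) = ((n * ((n-1).choose j) : ℕ) : ℤ) := by
        exact_mod_cast key
      push_cast [Nat.cast_sub hj] at key2
      linarith
    · rw [Nat.choose_eq_zero_of_lt hj, Nat.choose_eq_zero_of_lt (by omega)]
      simp

lemma pascal (t j : ℕ) (ht : 1 ≤ t) (hj : 1 ≤ j) :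
    (t.choose j : ℤ) = ((t-1).choose j : ℤ) + ((t-1).choose (j-1) : ℤ) := by
  have h := Nat.choose_succ_succ (t-1) (j-1)
  rw [Nat.succ_eq_add_one, Nat.succ_eq_add_one, show t - 1 + 1 = t by omega,
    show j - 1 + 1 = j by omega] at h
  push_cast [h]
  ring

lemma sum_range_ext {m t : ℕ} (h : m ≤ t) (F : ℕ → ℤ)
    (hF : ∀ i, m ≤ i → i < t → F i = 0) :
    ∑ i ∈ Finset.range m, F i = ∑ i ∈ Finset.range t, F i := by
  apply Finset.sum_subset (Finset.range_subset_range.mpr h)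
  intro x hx hnx
  simp only [Finset.mem_range] at hx hnx
  exact hF x (by omega) hx

lemma icc1_to_range (m : ℕ) (F : ℕ → ℤ) :
    ∑ k ∈ Finset.Icc 1 m, F k = ∑ i ∈ Finset.range m, F (i+1) := by
  rw [← Finset.Ico_add_one_right_eq_Icc, Finset.sum_Ico_eq_sum_range]
  simp [Nat.add_comm]

lemma base_sum (t : ℕ) (ht : 1 ≤ t) (p : ℕ → ℤ) :
    p 0 + ∑ k ∈ Finset.Icc 1 t, (t.choose k : ℤ) * odf k * p k
    = (p 0 + ∑ k ∈ Finset.Icc 1 (t-1), ((t-1).choose k : ℤ) * odf k * p k)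
      + (2*(t:ℤ) - 1) * (p 1 + ∑ j ∈ Finset.Icc 1 (t-1), ((t-1).choose j : ℤ) * odf j * p (j+1))
      - (2*(t:ℤ) - 2) * (p 1 + ∑ j ∈ Finset.Icc 1 (t-2), ((t-2).choose j : ℤ) * odf j * p (j+1)) := by
  obtain ⟨u, rfl⟩ : ∃ u, t = u + 1 := ⟨t - 1, by omega⟩
  rw [icc1_to_range (u+1) (fun k => ((u+1).choose k : ℤ) * odf k * p k),
    icc1_to_range (u+1-1) (fun k => ((u+1-1).choose k : ℤ) * odf k * p k),
    icc1_to_range (u+1-1) (fun k => ((u+1-1).choose k : ℤ) * odf k * p (k+1)),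
    icc1_to_range (u+1-2) (fun k => ((u+1-2).choose k : ℤ) * odf k * p (k+1))]
  simp only [show u + 1 - 1 = u from rfl, show u + 1 - 2 = u - 1 by omega]
  have e1 : ∑ i ∈ Finset.range (u+1), ((u+1).choose (i+1) : ℤ) * odf (i+1) * p (i+1)
      = ∑ i ∈ Finset.range (u+1), ((u.choose i : ℤ) * odf (i+1) * p (i+1)
          + (u.choose (i+1) : ℤ) * odf (i+1) * p (i+1)) := by
    apply Finset.sum_congr rfl
    intro i _
    rw [Nat.choose_succ_succ]
    push_cast
    ring
  rw [e1, Finset.sum_add_distrib,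
    Finset.sum_range_succ' (fun i => (u.choose i : ℤ) * odf (i+1) * p (i+1)) u,
    Finset.sum_range_succ (fun i => (u.choose (i+1) : ℤ) * odf (i+1) * p (i+1)) u]
  rw [Nat.choose_succ_self]
  have hext : ∑ i ∈ Finset.range (u-1), ((u-1).choose (i+1) : ℤ) * odf (i+1) * p (i+1+1)
      = ∑ i ∈ Finset.range u, ((u-1).choose (i+1) : ℤ) * odf (i+1) * p (i+1+1) := by
    apply sum_range_ext (by omega)
    intro i h1 h2
    rw [Nat.choose_eq_zero_of_lt (by omega)]
    simp
  rw [hext]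
  have key : ∑ i ∈ Finset.range u, (u.choose (i+1) : ℤ) * odf (i+1+1) * p (i+1+1)
      = ∑ i ∈ Finset.range u, ((2*(u:ℤ)+1) * ((u.choose (i+1) : ℤ) * odf (i+1) * p (i+1+1))
          - 2*(u:ℤ) * (((u-1).choose (i+1) : ℤ) * odf (i+1) * p (i+1+1))) := by
    apply Finset.sum_congr rfl
    intro i _
    rw [odf_succ (i+1)]
    have hc := choose_id u (i+1)
    push_cast at hc ⊢
    linear_combination (-2) * odf (i+1) * p (i+1+1) * hc
  rw [key, Finset.sum_sub_distrib, ← Finset.mul_sum, ← Finset.mul_sum]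
  rw [Nat.choose_zero_right, odf_one]
  push_cast
  ring

lemma tele (t : ℕ) (ht : 1 ≤ t) (A : ℤ) (Ak p q : ℕ → ℤ)
    (hAk : ∀ k, 1 ≤ k → k < t → Ak k = A - 2*(k:ℤ) - 1) (hA0 : Ak 0 = A - 1)
    (hpq : ∀ k, k ≤ t → p k - q k = Ak k * (p (k+1) - q (k+1)) + q (k+1)) :
    p 0 + ∑ k ∈ Finset.Icc 1 t, (t.choose k : ℤ) * odf k * p k
    = (q 0 + ∑ k ∈ Finset.Icc 1 t, (t.choose k : ℤ) * odf k * q k)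
      + A * (p 1 + ∑ j ∈ Finset.Icc 1 (t-1), ((t-1).choose j : ℤ) * odf j * p (j+1))
      - (A - 1) * (q 1 + ∑ j ∈ Finset.Icc 1 (t-1), ((t-1).choose j : ℤ) * odf j * q (j+1)) := by
  set g : ℕ → ℤ := fun k => p k - q k with hg
  have hgrec : ∀ k, k ≤ t → g k = Ak k * g (k+1) + q (k+1) := fun k hk => hpq k hk
  set c : ℕ → ℤ := fun k => (t.choose k : ℤ) * odf k with hc
  set c' : ℕ → ℤ := fun k => ((t-1).choose k : ℤ) * odf k with hc'
  set w : ℕ → ℤ := fun j => ((t-1).choose (j-1) : ℤ) * odf j with hw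
  have claim : ∀ m, m ≤ t →
      ∑ k ∈ Finset.Icc (t+1-m) t, (c k * g k - c' k * (A * g (k+1) + q (k+1)))
        = w (t+1-m) * g (t+1-m) := by
    intro m
    induction m with
    | zero =>
      intro _
      rw [show t + 1 - 0 = t + 1 from rfl, Finset.Icc_eq_empty (by omega), Finset.sum_empty]
      simp only [hw, show t + 1 - 1 = t from rfl]
      rw [Nat.choose_eq_zero_of_lt (by omega)]
      simp
    | succ m ih =>
      intro hm
      set j := t - m with hj
      have hjt : t + 1 - (m+1) = j := by omega
      have hj1 : 1 ≤ j := by omega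
      have hjle : j ≤ t := by omega
      rw [hjt]
      rw [Finset.Icc_eq_cons_Ioc hjle, Finset.sum_cons, ← Finset.Icc_add_one_left_eq_Ioc]
      have ihh := ih (by omega)
      rw [show t + 1 - m = j + 1 by omega] at ihh
      rw [ihh]
      have hgj : g j = Ak j * g (j+1) + q (j+1) := hgrec j hjle
      have hcw : c j = w j + c' j := by
        simp only [hc, hw, hc']
        rw [pascal t j ht hj1]
        ring
      have hwj : w (j+1) = c' j * (A - Ak j) := by
        rcases eq_or_lt_of_le hjle with heq | hlt
        · simp only [hw, hc', show j + 1 - 1 = j from rfl]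
          rw [heq, Nat.choose_eq_zero_of_lt (by omega)]
          simp
        · rw [hAk j hj1 hlt]
          simp only [hw, hc', show j + 1 - 1 = j from rfl]
          rw [odf_succ j]
          push_cast
          ring
      linear_combination c' j * hgj + g (j+1) * hwj + g j * hcw
  have hT := claim t (le_refl t)
  rw [show t + 1 - t = 1 by omega] at hT
  have hw1 : w 1 = 1 := by
    simp only [hw, show (1:ℕ) - 1 = 0 from rfl]
    simp [odf_one]
  rw [hw1, one_mul] at hT
  rw [Finset.sum_sub_distrib] at hT
  have hs1 : ∑ k ∈ Finset.Icc 1 t, c k * g k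
      = ∑ k ∈ Finset.Icc 1 t, c k * p k - ∑ k ∈ Finset.Icc 1 t, c k * q k := by
    rw [← Finset.sum_sub_distrib]
    apply Finset.sum_congr rfl
    intro k _
    simp only [hg]
    ring
  have hs2 : ∑ k ∈ Finset.Icc 1 t, c' k * (A * g (k+1) + q (k+1))
      = A * ∑ k ∈ Finset.Icc 1 t, c' k * p (k+1)
        - (A - 1) * ∑ k ∈ Finset.Icc 1 t, c' k * q (k+1) := by
    rw [Finset.mul_sum, Finset.mul_sum, ← Finset.sum_sub_distrib]
    apply Finset.sum_congr rfl
    intro k _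
    simp only [hg]
    ring
  rw [hs1, hs2] at hT
  have hext : ∀ r : ℕ → ℤ, ∑ k ∈ Finset.Icc 1 t, c' k * r (k+1)
      = ∑ k ∈ Finset.Icc 1 (t-1), c' k * r (k+1) := by
    intro r
    conv_lhs => rw [show t = (t-1)+1 by omega]
    rw [Finset.sum_Icc_succ_top (by omega)]
    simp only [hc', show (t-1)+1-1 = t-1 from rfl]
    rw [show (t-1)+1 = t by omega, Nat.choose_eq_zero_of_lt (by omega)]
    simp
  rw [hext p, hext q] at hT
  have hp0 := hpq 0 (by omega)
  rw [hA0] at hp0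
  simp only [hc, hc', hg] at hT
  linear_combination hT + hp0

lemma getD_append_len1 (a b : List ℕ) (x z d : ℕ) :
    (a ++ x :: z :: b).getD (a.length + 1) d = z := by
  induction a with
  | nil => simp
  | cons y a ih => simpa using ih

lemma concat_decomp {l : List ℕ} (h : l ≠ []) : l = l.dropLast ++ [l.getLastD 0] := by
  rcases List.eq_nil_or_concat l with rfl | ⟨L, c, rfl⟩
  · exact absurd rfl h
  · simp [List.concat_eq_append, List.dropLast_concat, List.getLastD_concat]

lemma star (f : List ℕ → ℤ)
    (hfr : ∀ l : List ℕ, IsPartition l → 2 ≤ l.length →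
      f l = f l.dropLast + ∑ k ∈ Finset.Icc 1 (l.getLastD 0),
        ((l.getLastD 0).choose k : ℤ) * odf k * f (subHat k l.dropLast)) :
    ∀ (n : ℕ) (lam : List ℕ), lam.sum ≤ n → IsPartition lam → 2 ≤ lam.length →
      ∀ i : ℕ, 2 ≤ i → i ≤ lam.length →
      (i = lam.length ∨ lam.getD i 0 < lam.getD (i-1) 0) →
      f lam = f (downAt i lam)
        + (2 * (lam.getD (i-1) 0 : ℤ) + (lam.length : ℤ) - (i : ℤ) - 1) * f (subHat 1 lam)
        - (2 * (lam.getD (i-1) 0 : ℤ) + (lam.length : ℤ) - (i : ℤ) - 2)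
            * f (subHat 1 (downAt i lam)) := by
  intro N
  induction N with
  | zero =>
    intro lam hsum hpart hlen i _ _ _
    exfalso
    obtain ⟨hpw, hpos⟩ := (isPartition_iff lam).mp hpart
    have := length_le_sum hpos
    omega
  | succ N IH =>
    intro lam hsum hpart hlen i hi2 his hcond
    obtain ⟨hpw, hpos⟩ := (isPartition_iff lam).mp hpart
    have hne : lam ≠ [] := by intro h; rw [h] at hlen; simp at hlen
    set μ := lam.dropLast with hμ
    set t := lam.getLastD 0 with ht
    have hdec : lam = μ ++ [t] := concat_decomp hne
    have hμlen : μ.length + 1 = lam.length := by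
      conv_rhs => rw [hdec]
      simp
    have hpw' : List.Pairwise (· ≥ ·) (μ ++ [t]) := hdec ▸ hpw
    rw [List.pairwise_append] at hpw'
    obtain ⟨hpwμ, -, hμt'⟩ := hpw'
    have hμget : ∀ y ∈ μ, t ≤ y := fun y hy => hμt' y hy t (by simp)
    have hμpos : ∀ y ∈ μ, 0 < y := by
      intro y hy
      exact hpos y (by rw [hdec]; simp [hy])
    have ht1 : 1 ≤ t := hpos t (by rw [hdec]; simp)
    have hμpart : IsPartition μ := (isPartition_iff μ).mpr ⟨hpwμ, hμpos⟩
    have hp0 : subHat 0 μ = μ := subHat_zero hμpos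
    have hsumμ : μ.sum + t = lam.sum := by rw [hdec]; simp
    have hE1 : f lam = f μ + ∑ k ∈ Finset.Icc 1 t,
        (t.choose k : ℤ) * odf k * f (subHat k μ) := hfr lam hpart hlen
    -- helper : subHat 1 μ is a plain map when 2 ≤ t
    rcases eq_or_lt_of_le his with hi_s | hi_lt
    · -- CASE i = lam.length
      have hgd : lam.getD (i-1) 0 = t := by
        have h1 : i - 1 = μ.length := by omega
        rw [hdec, h1, getD_append_len]
      have hiZ : (i:ℤ) = (lam.length:ℤ) := by exact_mod_cast hi_s
      rcases eq_or_lt_of_le ht1 with ht_eq | ht2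
      · -- t = 1
        have hdown : downAt i lam = μ := by
          rw [hdec, downAt_decomp (show μ.length = i - 1 by omega) hμpos (by simp),
            if_pos (by omega)]
          simp
        have hsub1 : subHat 1 lam = subHat 1 μ := by
          rw [hdec, subHat_append, subHat_cons_le (by omega), subHat_nil, List.append_nil]
        rw [hE1, hdown, hsub1, hgd, ← ht_eq]
        rw [Finset.Icc_self, Finset.sum_singleton, odf_one, Nat.choose_self]
        push_cast [← hiZ]
        ring
      · -- 2 ≤ t
        have hdown : downAt i lam = μ ++ [t-1] := by
          rw [hdec, downAt_decomp (show μ.length = i - 1 by omega) hμpos (by simp),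
            if_neg (by omega)]
        have hpart2 : IsPartition (μ ++ [t-1]) := by
          rw [isPartition_iff]
          constructor
          · rw [List.pairwise_append]
            refine ⟨hpwμ, by simp, ?_⟩
            intro y hy z hz
            simp only [List.mem_singleton] at hz
            subst hz
            have := hμget y hy
            omega
          · intro y hy
            rcases List.mem_append.mp hy with h | h
            · exact hμpos y h
            · simp only [List.mem_singleton] at h
              omega
        have hE2 : f (μ ++ [t-1]) = f μ + ∑ k ∈ Finset.Icc 1 (t-1),
            ((t-1).choose k : ℤ) * odf k * f (subHat k μ) := by
          have h := hfr (μ ++ [t-1]) hpart2 (by rw [List.length_append]; simp; omega)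
          rwa [List.dropLast_concat, List.getLastD_concat] at h
        have hmap1 : subHat 1 μ = μ.map (fun z => z - 1) :=
          subHat_eq_map (fun y hy => by have := hμget y hy; omega)
        have hlen1 : (subHat 1 μ).length = μ.length := by rw [hmap1, List.length_map]
        have hsub1mem : ∀ y ∈ subHat 1 μ, t - 1 ≤ y := by
          intro y hy
          rw [hmap1, List.mem_map] at hy
          obtain ⟨z, hz, rfl⟩ := hy
          have := hμget z hz
          omega
        have hsub1pos : ∀ y ∈ subHat 1 μ, 0 < y := subHat_pos 1
        have hpart13 : ∀ m : ℕ, 1 ≤ m → m + 1 ≤ t → IsPartition (subHat 1 μ ++ [t-1-m+1]) := by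
          intro m _ _
          rw [isPartition_iff]
          constructor
          · rw [List.pairwise_append]
            refine ⟨(hμpart.subHat 1 |>.1 |> (List.isChain_iff_pairwise).mp), by simp, ?_⟩
            intro y hy z hz
            simp only [List.mem_singleton] at hz
            subst hz
            have := hsub1mem y hy
            omega
          · intro y hy
            rcases List.mem_append.mp hy with h | h
            · exact hsub1pos y h
            · simp only [List.mem_singleton] at h
              omega
        have hE3gen : ∀ m : ℕ, 1 ≤ m → m + 1 ≤ t →
            f (subHat 1 μ ++ [t-1-m+1]) = f (subHat 1 μ) + ∑ j ∈ Finset.Icc 1 (t-1-m+1),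
              ((t-1-m+1).choose j : ℤ) * odf j * f (subHat (j+1) μ) := by
          intro m hm1 hm2
          have h := hfr (subHat 1 μ ++ [t-1-m+1]) (hpart13 m hm1 hm2)
            (by rw [List.length_append, hlen1]; simp; omega)
          rw [List.dropLast_concat, List.getLastD_concat] at h
          rw [h]
          congr 1
          apply Finset.sum_congr rfl
          intro j _
          rw [subHat_subHat, Nat.add_comm 1 j]
        have hsub1 : subHat 1 lam = subHat 1 μ ++ [t-1] := by
          rw [hdec, subHat_append, subHat_cons_lt (by omega), subHat_nil]
        have hE3 : f (subHat 1 lam) = f (subHat 1 μ) + ∑ j ∈ Finset.Icc 1 (t-1),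
            ((t-1).choose j : ℤ) * odf j * f (subHat (j+1) μ) := by
          have h := hE3gen 1 (le_refl 1) (by omega)
          rw [show t-1-1+1 = t-1 by omega] at h
          rw [hsub1, h]
        have hE4 : f (subHat 1 (downAt i lam)) = f (subHat 1 μ) + ∑ j ∈ Finset.Icc 1 (t-2),
            ((t-2).choose j : ℤ) * odf j * f (subHat (j+1) μ) := by
          rw [hdown, subHat_append]
          rcases eq_or_lt_of_le (show 2 ≤ t from ht2) with ht_eq2 | ht3
          · rw [show subHat 1 [t-1] = [] from by
              rw [subHat_cons_le (by omega), subHat_nil], List.append_nil]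
            rw [show t - 2 = 0 by omega]
            simp
          · rw [show subHat 1 [t-1] = [t-1-1] from by
              rw [subHat_cons_lt (by omega), subHat_nil]]
            have h := hE3gen 2 (by omega) (by omega)
            rw [show t-1-2+1 = t-1-1 by omega] at h
            rw [h, show t-1-1 = t-2 by omega]
        have hbs := base_sum t ht1 (fun k => f (subHat k μ))
        rw [hp0] at hbs
        rw [hE1, hE3, hE4, hdown, hE2, hgd, ← hiZ]
        linear_combination hbs
    · -- CASE i < lam.length
      have hconds : lam.getD i 0 < lam.getD (i-1) 0 := by
        rcases hcond with h | h
        · omega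
        · exact h
      have hilen : i - 1 < μ.length := by omega
      set a := μ.take (i-1) with ha
      set x := μ.getD (i-1) 0 with hx
      set b := μ.drop ((i-1)+1) with hb
      have hμdec : μ = a ++ x :: b := eq_take_cons_drop hilen
      have halen : a.length = i - 1 := by rw [ha, List.length_take]; omega
      have hgd1 : lam.getD (i-1) 0 = x := by
        rw [hdec, List.getD_append _ _ _ _ hilen]
      have hile : i ≤ μ.length := by omega
      have hgdi_ge : t ≤ lam.getD i 0 := by
        rcases eq_or_lt_of_le hile with he | hl
        · rw [hdec, he, getD_append_len]
        · rw [hdec, List.getD_append _ _ _ _ hl]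
          have hmem : μ.getD i 0 ∈ μ := by
            rw [List.getD_eq_getElem _ _ hl]; exact List.getElem_mem hl
          exact hμget _ hmem
      have hxt : t < x := by omega
      have hx2 : 2 ≤ x := by omega
      -- pairwise facts from the decomposition of μ
      have hpwμ' : List.Pairwise (· ≥ ·) (a ++ x :: b) := hμdec ▸ hpwμ
      rw [List.pairwise_append, List.pairwise_cons] at hpwμ'
      obtain ⟨hpwa, ⟨hxb, hpwb⟩, hab⟩ := hpwμ'
      have hax : ∀ y ∈ a, x ≤ y := fun y hy => hab y hy x (by simp)
      have hapos : ∀ y ∈ a, 0 < y := fun y hy => hμpos y (by rw [hμdec]; simp [hy])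
      have hbpos : ∀ y ∈ b, 0 < y := fun y hy => hμpos y (by rw [hμdec]; simp [hy])
      have hat : ∀ y ∈ a, t < y := fun y hy => lt_of_lt_of_le hxt (hax y hy)
      have hbt : ∀ y ∈ b, t ≤ y := fun y hy => hμget y (by rw [hμdec]; simp [hy])
      have hblt : ∀ y ∈ b, y < x := by
        intro y hy
        rcases eq_or_lt_of_le hile with he | hl
        · exfalso
          have hbnil : b = [] := by
            rw [hb, show (i-1)+1 = i by omega, he, List.drop_length]
          rw [hbnil] at hy
          simp at hy
        · have hbeq : b = μ.getD i 0 :: μ.drop (i+1) := by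
            rw [hb, show (i-1)+1 = i by omega, List.drop_eq_getElem_cons hl,
              List.getD_eq_getElem _ _ hl]
          have hgdi : μ.getD i 0 < x := by
            have h2 : lam.getD i 0 = μ.getD i 0 := by
              rw [hdec, List.getD_append _ _ _ _ hl]
            omega
          rw [hbeq] at hy
          rcases List.mem_cons.mp hy with rfl | hy'
          · exact hgdi
          · have hb2 : List.Pairwise (· ≥ ·) (μ.getD i 0 :: μ.drop (i+1)) := hbeq ▸ hpwb
            have := List.rel_of_pairwise_cons hb2 hy'
            omega
      have hμ'dec : downAt i μ = a ++ (x-1) :: b := by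
        rw [hμdec, downAt_decomp halen hapos hbpos, if_neg (by omega)]
      have hμ'pos : ∀ y ∈ downAt i μ, 0 < y := by
        rw [hμ'dec]
        intro y hy
        rcases List.mem_append.mp hy with h | h
        · exact hapos y h
        · rcases List.mem_cons.mp h with rfl | h'
          · omega
          · exact hbpos y h'
      have hμ'mem : ∀ y ∈ downAt i μ, t ≤ y := by
        rw [hμ'dec]
        intro y hy
        rcases List.mem_append.mp hy with h | h
        · exact le_of_lt (hat y h)
        · rcases List.mem_cons.mp h with rfl | h'
          · omega
          · exact hbt y h'
      have hμ'pw : List.Pairwise (· ≥ ·) (downAt i μ) := by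
        rw [hμ'dec, List.pairwise_append, List.pairwise_cons]
        refine ⟨hpwa, ⟨fun y hy => by have := hblt y hy; omega, hpwb⟩, ?_⟩
        intro y hy z hz
        rcases List.mem_cons.mp hz with rfl | hz'
        · have := hax y hy; omega
        · have h1 := hax y hy
          have h2 := hblt z hz'
          omega
      have hμ'part : IsPartition (downAt i μ) := (isPartition_iff _).mpr ⟨hμ'pw, hμ'pos⟩
      have hμ'len : (downAt i μ).length = μ.length := by
        rw [hμ'dec, hμdec]; simp
      have hq0 : subHat 0 (downAt i μ) = downAt i μ := subHat_zero hμ'pos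
      -- downAt i lam = downAt i μ ++ [t]
      have hdownlam : downAt i lam = downAt i μ ++ [t] := by
        rw [hμ'dec, hdec, hμdec,
          show (a ++ x :: b) ++ [t] = a ++ x :: (b ++ [t]) by simp,
          downAt_decomp halen hapos (by
            intro y hy
            rcases List.mem_append.mp hy with h | h
            · exact hbpos y h
            · simp only [List.mem_singleton] at h; omega),
          if_neg (by omega)]
        simp
      have hpart2 : IsPartition (downAt i μ ++ [t]) := by
        rw [isPartition_iff]
        constructor
        · rw [List.pairwise_append]
          exact ⟨hμ'pw, by simp, fun y hy z hz => by
            simp only [List.mem_singleton] at hz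
            subst hz
            exact hμ'mem y hy⟩
        · intro y hy
          rcases List.mem_append.mp hy with h | h
          · exact hμ'pos y h
          · simp only [List.mem_singleton] at h; omega
      have hE2 : f (downAt i lam) = f (downAt i μ) + ∑ k ∈ Finset.Icc 1 t,
          (t.choose k : ℤ) * odf k * f (subHat k (downAt i μ)) := by
        rw [hdownlam]
        have h := hfr (downAt i μ ++ [t]) hpart2
          (by rw [List.length_append, hμ'len]; simp; omega)
        rwa [List.dropLast_concat, List.getLastD_concat] at h
      -- E3 : subHat 1 lam
      have hE3 : f (subHat 1 lam) = f (subHat 1 μ) + ∑ j ∈ Finset.Icc 1 (t-1),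
          ((t-1).choose j : ℤ) * odf j * f (subHat (j+1) μ) := by
        rcases eq_or_lt_of_le ht1 with ht_eq | ht2
        · rw [hdec, subHat_append, subHat_cons_le (by omega), subHat_nil, List.append_nil]
          rw [show t - 1 = 0 by omega]
          simp
        · have hmap1 : subHat 1 μ = μ.map (fun z => z - 1) :=
            subHat_eq_map (fun y hy => by have := hμget y hy; omega)
          have hlen1 : (subHat 1 μ).length = μ.length := by rw [hmap1, List.length_map]
          have hsub1 : subHat 1 lam = subHat 1 μ ++ [t-1] := by
            rw [hdec, subHat_append, subHat_cons_lt (by omega), subHat_nil]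
          have hpart3 : IsPartition (subHat 1 μ ++ [t-1]) := by
            rw [isPartition_iff]
            constructor
            · rw [List.pairwise_append]
              refine ⟨(List.isChain_iff_pairwise).mp (hμpart.subHat 1).1, by simp, ?_⟩
              intro y hy z hz
              simp only [List.mem_singleton] at hz
              subst hz
              rw [hmap1, List.mem_map] at hy
              obtain ⟨z, hz, rfl⟩ := hy
              have := hμget z hz
              omega
            · intro y hy
              rcases List.mem_append.mp hy with h | h
              · exact subHat_pos 1 y h
              · simp only [List.mem_singleton] at h; omega
          have h := hfr (subHat 1 μ ++ [t-1]) hpart3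
            (by rw [List.length_append, hlen1]; simp; omega)
          rw [List.dropLast_concat, List.getLastD_concat] at h
          rw [hsub1, h]
          congr 1
          apply Finset.sum_congr rfl
          intro j _
          rw [subHat_subHat, Nat.add_comm 1 j]
      -- E4 : subHat 1 (downAt i lam)
      have hE4 : f (subHat 1 (downAt i lam)) = f (subHat 1 (downAt i μ))
          + ∑ j ∈ Finset.Icc 1 (t-1),
            ((t-1).choose j : ℤ) * odf j * f (subHat (j+1) (downAt i μ)) := by
        rcases eq_or_lt_of_le ht1 with ht_eq | ht2
        · rw [hdownlam, subHat_append, subHat_cons_le (by omega), subHat_nil,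
            List.append_nil]
          rw [show t - 1 = 0 by omega]
          simp
        · have hmap1 : subHat 1 (downAt i μ) = (downAt i μ).map (fun z => z - 1) :=
            subHat_eq_map (fun y hy => by have := hμ'mem y hy; omega)
          have hlen1 : (subHat 1 (downAt i μ)).length = μ.length := by
            rw [hmap1, List.length_map, hμ'len]
          have hsub1 : subHat 1 (downAt i lam) = subHat 1 (downAt i μ) ++ [t-1] := by
            rw [hdownlam, subHat_append, subHat_cons_lt (by omega), subHat_nil]
          have hpart3 : IsPartition (subHat 1 (downAt i μ) ++ [t-1]) := by
            rw [isPartition_iff]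
            constructor
            · rw [List.pairwise_append]
              refine ⟨(List.isChain_iff_pairwise).mp (hμ'part.subHat 1).1, by simp, ?_⟩
              intro y hy z hz
              simp only [List.mem_singleton] at hz
              subst hz
              rw [hmap1, List.mem_map] at hy
              obtain ⟨z, hz, rfl⟩ := hy
              have := hμ'mem z hz
              omega
            · intro y hy
              rcases List.mem_append.mp hy with h | h
              · exact subHat_pos 1 y h
              · simp only [List.mem_singleton] at h; omega
          have h := hfr (subHat 1 (downAt i μ) ++ [t-1]) hpart3
            (by rw [List.length_append, hlen1]; simp; omega)
          rw [List.dropLast_concat, List.getLastD_concat] at h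
          rw [hsub1, h]
          congr 1
          apply Finset.sum_congr rfl
          intro j _
          rw [subHat_subHat, Nat.add_comm 1 j]
      -- structure of subHat k μ for k ≤ t
      have hμsub : ∀ k, k ≤ t → subHat k μ
          = a.map (fun z => z - k) ++ (x - k) :: subHat k b := by
        intro k hk
        rw [hμdec, subHat_append, subHat_eq_map (fun y hy => by have := hat y hy; omega),
          subHat_cons_lt (by omega)]
      have hmaplen : ∀ k : ℕ, (a.map (fun z => z - k)).length = i - 1 := by
        intro k; rw [List.length_map, halen]
      have hlen_sub : ∀ k, k ≤ t → i ≤ (subHat k μ).length := by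
        intro k hk
        rw [hμsub k hk, List.length_append, hmaplen k]
        simp; omega
      have hgd_sub : ∀ k, k ≤ t → (subHat k μ).getD (i-1) 0 = x - k := by
        intro k hk
        rw [hμsub k hk, ← hmaplen k, getD_append_len]
      have hcond_sub : ∀ k, k ≤ t → (i = (subHat k μ).length
          ∨ (subHat k μ).getD i 0 < (subHat k μ).getD (i-1) 0) := by
        intro k hk
        rcases hsb : subHat k b with _ | ⟨z, B'⟩
        · left
          rw [hμsub k hk, hsb, List.length_append, hmaplen k]
          simp; omega
        · right
          have hz : z ∈ subHat k b := by rw [hsb]; simp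
          have hz' : z ∈ (b.map (fun y => y - k)).filter (fun y => y ≠ 0) := hz
          rw [List.mem_filter, List.mem_map] at hz'
          obtain ⟨⟨y, hy, rfl⟩, hz0⟩ := hz'
          have hyx := hblt y hy
          have hz0' : y - k ≠ 0 := by simpa using hz0
          rw [hgd_sub k hk, hμsub k hk, hsb]
          rw [show i = (a.map (fun z => z - k)).length + 1 by rw [hmaplen k]; omega,
            getD_append_len1]
          omega
      -- the recursion hypotheses from IH
      have hsum_sub : ∀ k, (subHat k μ).sum ≤ N := by
        intro k
        have h1 := subHat_sum_le k μ
        omega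
      have hpq : ∀ k, k ≤ t →
          f (subHat k μ) - f (subHat k (downAt i μ))
            = (2 * ((subHat k μ).getD (i-1) 0 : ℤ) + ((subHat k μ).length : ℤ) - i - 1)
                * (f (subHat (k+1) μ) - f (subHat (k+1) (downAt i μ)))
              + f (subHat (k+1) (downAt i μ)) := by
        intro k hk
        have hcomm : downAt i (subHat k μ) = subHat k (downAt i μ) := by
          rcases Nat.eq_zero_or_pos k with rfl | hk1
          · rw [subHat_zero hμpos, subHat_zero hμ'pos]
          · rw [hμ'dec, hμdec,
              downAt_subHat_comm halen hk1 (by omega) (fun y hy => by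
                have := hat y hy; omega) hbpos,
              downAt_decomp halen hapos hbpos, if_neg (by omega)]
        have hIH := IH (subHat k μ) (hsum_sub k) (hμpart.subHat k)
          (le_trans hi2 (hlen_sub k hk)) i hi2 (hlen_sub k hk) (hcond_sub k hk)
        rw [hcomm, subHat_subHat, subHat_subHat] at hIH
        linear_combination hIH
      -- coefficients
      have hAk : ∀ k, 1 ≤ k → k < t →
          (2 * ((subHat k μ).getD (i-1) 0 : ℤ) + ((subHat k μ).length : ℤ) - i - 1)
            = (2 * (lam.getD (i-1) 0 : ℤ) + (lam.length : ℤ) - i - 1) - 2*(k:ℤ) - 1 := by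
        intro k h1 h2
        have hbk : subHat k b = b.map (fun z => z - k) :=
          subHat_eq_map (fun y hy => by have := hbt y hy; omega)
        have hlk : (subHat k μ).length = μ.length := by
          rw [hμsub k (le_of_lt h2), hbk]
          conv_rhs => rw [hμdec]
          simp
        have hgdk := hgd_sub k (le_of_lt h2)
        rw [hgdk, hlk, hgd1]
        have hcast : ((x - k : ℕ) : ℤ) = (x:ℤ) - (k:ℤ) := by
          have : k ≤ x := by omega
          push_cast [this]; ring
        rw [hcast]
        have hlen' : (lam.length : ℤ) = (μ.length : ℤ) + 1 := by exact_mod_cast hμlen.symm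
        rw [hlen']
        ring
      have hA0 : (2 * ((subHat 0 μ).getD (i-1) 0 : ℤ) + ((subHat 0 μ).length : ℤ) - i - 1)
          = (2 * (lam.getD (i-1) 0 : ℤ) + (lam.length : ℤ) - i - 1) - 1 := by
        rw [hp0, ← hx, hgd1]
        have hlen' : (lam.length : ℤ) = (μ.length : ℤ) + 1 := by exact_mod_cast hμlen.symm
        rw [hlen']
        ring
      -- apply tele
      have htele := tele t ht1 (2 * (lam.getD (i-1) 0 : ℤ) + (lam.length : ℤ) - i - 1)
        (fun k => 2 * ((subHat k μ).getD (i-1) 0 : ℤ) + ((subHat k μ).length : ℤ) - i - 1)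
        (fun k => f (subHat k μ)) (fun k => f (subHat k (downAt i μ)))
        hAk hA0 hpq
      rw [hp0, hq0] at htele
      rw [hE1, hE3, hE4, hE2]
      linear_combination htele

lemma subHat_one_headD' {l : List ℕ} (h2 : 2 ≤ l.headD 0) :
    (subHat 1 l).headD 0 = l.headD 0 - 1 := by
  cases l with
  | nil => simp at h2
  | cons x l =>
    simp only [List.headD_cons] at h2 ⊢
    rw [subHat_cons_lt (by omega)]
    simp

lemma headD_append_ne_nil {A r : List ℕ} (h : A ≠ []) (d : ℕ) :
    (A ++ r).headD d = A.headD d := by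
  cases A with
  | nil => exact absurd rfl h
  | cons x l => simp

theorem stmt6
    (d : Nat → Int) (hd0 : d 0 = 1) (hd1 : d 1 = 0)
    (hd : ∀ n : Nat, 2 ≤ n → d n = 2 * ((n : Int) - 1) * (d (n - 1) + d (n - 2)))
    (f : List Nat → Int) (hf0 : f [] = 1) (hf1 : ∀ m : Nat, f [m] = d m)
    (hfr : ∀ l : List Nat, IsPartition l → 2 ≤ l.length →
      f l = f l.dropLast + ∑ k ∈ Finset.Icc 1 (l.getLastD 0),
        ((l.getLastD 0).choose k : Int) * odf k * f (subHat k l.dropLast))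
    (η : List Nat → Int) (hη : ∀ l : List Nat, η l = (-1 : Int) ^ (l.sum - l.headD 0) * f l)
    (lam : List Nat) (hlam : IsPartition lam) (hs : 2 ≤ lam.length)
    (i : Nat) (hi2 : 2 ≤ i) (his : i ≤ lam.length)
    (hcond : i = lam.length ∨ lam.getD i 0 < lam.getD (i - 1) 0) :
    η lam = -η (downAt i lam)
        + (-1 : Int) ^ (lam.length + 1)
          * (2 * (lam.getD (i - 1) 0 : Int) + (lam.length : Int) - (i : Int) - 1)
          * η (subHat 1 lam)
        + (-1 : Int) ^ (lam.length + 1)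
          * (2 * (lam.getD (i - 1) 0 : Int) + (lam.length : Int) - (i : Int) - 2)
          * η (subHat 1 (downAt i lam)) := by
  obtain ⟨hpw, hpos⟩ := (isPartition_iff lam).mp hlam
  have hstar := star f hfr lam.sum lam (le_refl _) hlam hs i hi2 his hcond
  have hilen : i - 1 < lam.length := by omega
  set A := lam.take (i-1) with hA
  set v := lam.getD (i-1) 0 with hv
  set B := lam.drop ((i-1)+1) with hB
  have hdecA : lam = A ++ v :: B := eq_take_cons_drop hilen
  have hAlen : A.length = i - 1 := by rw [hA, List.length_take]; omega
  have hAne : A ≠ [] := by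
    intro h
    have := congrArg List.length h
    rw [hAlen] at this
    simp at this
    omega
  have hApos : ∀ y ∈ A, 0 < y := fun y hy => hpos y (by rw [hdecA]; simp [hy])
  have hBpos : ∀ y ∈ B, 0 < y := fun y hy => hpos y (by rw [hdecA]; simp [hy])
  have hv1 : 1 ≤ v := hpos v (by rw [hdecA]; simp)
  have hheadA : lam.headD 0 = A.headD 0 := by
    conv_lhs => rw [hdecA]
    exact headD_append_ne_nil hAne 0
  have hF1 : lam.headD 0 + lam.length ≤ lam.sum + 1 := head_add_length_le hpos
  have hh1 : 1 ≤ lam.headD 0 := by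
    cases lam with
    | nil => simp at hs
    | cons y l => exact hpos y (by simp)
  have hsl : lam.length ≤ lam.sum := length_le_sum hpos
  have husum : (subHat 1 lam).sum = lam.sum - lam.length := by
    have := subHat_one_sum hpos
    omega
  have huhead : (subHat 1 lam).headD 0 = lam.headD 0 - 1 := subHat_one_headD hlam
  have hsumA : lam.sum = A.sum + v + B.sum := by
    conv_lhs => rw [hdecA]
    simp
    ring
  rcases eq_or_lt_of_le hv1 with hv_eq | hv2
  · -- CASE v = 1 : then i = lam.length, last coefficient vanishes
    have hi_s : i = lam.length := by
      rcases Nat.lt_or_ge i lam.length with hlt | hge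
      · exfalso
        have hmem : lam.getD i 0 ∈ lam := by
          rw [List.getD_eq_getElem _ _ hlt]; exact List.getElem_mem hlt
        have := hpos _ hmem
        rcases hcond with h | h
        · omega
        · omega
      · omega
    have hBnil : B = [] := by
      rw [hB, show (i-1)+1 = i by omega, hi_s, List.drop_length]
    have hdown : downAt i lam = A := by
      rw [hdecA, downAt_decomp hAlen hApos hBpos, if_pos (by omega), hBnil,
        List.append_nil]
    have hiZ : (i:ℤ) = (lam.length:ℤ) := by exact_mod_cast hi_s
    have hC2 : 2 * (v : ℤ) + (lam.length : ℤ) - (i : ℤ) - 2 = 0 := by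
      rw [← hv_eq, hiZ]
      push_cast
      ring
    have hdsum : (downAt i lam).sum = lam.sum - 1 := by
      rw [hdown]
      rw [hBnil] at hsumA
      simp at hsumA
      omega
    have hdhead : (downAt i lam).headD 0 = lam.headD 0 := by rw [hdown, hheadA]
    rw [hC2] at hstar ⊢
    rw [hη lam, hη (downAt i lam), hη (subHat 1 lam)]
    rw [hdsum, hdhead, husum, huhead]
    have hd' : ((-1:ℤ))^(lam.sum - 1 - lam.headD 0) = -(-1:ℤ)^(lam.sum - lam.headD 0) := by
      rw [show lam.sum - lam.headD 0 = (lam.sum - 1 - lam.headD 0) + 1 by omega, pow_succ]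
      ring
    have hu' : ((-1:ℤ))^(lam.length + 1) * (-1:ℤ)^(lam.sum - lam.length - (lam.headD 0 - 1))
        = (-1:ℤ)^(lam.sum - lam.headD 0) := by
      rw [show lam.sum - lam.headD 0
          = (lam.sum - lam.length - (lam.headD 0 - 1)) + (lam.length - 1) by omega,
        show lam.length + 1 = (lam.length - 1) + 2 by omega, pow_add, pow_add]
      ring
    linear_combination ((-1:ℤ)^(lam.sum - lam.headD 0)) * hstar
      + (f (downAt i lam)) * hd'
      - ((2 * (v : ℤ) + (lam.length : ℤ) - (i : ℤ) - 1)
          * f (subHat 1 lam)) * hu'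
  · -- CASE 2 ≤ v
    have hle_head : ∀ y ∈ lam, y ≤ lam.headD 0 := by
      cases lam with
      | nil => simp
      | cons z l =>
        intro y hy
        rcases List.mem_cons.mp hy with rfl | hy'
        · simp
        · simp only [List.headD_cons]
          exact List.rel_of_pairwise_cons hpw hy'
    have hheadv : v ≤ lam.headD 0 := hle_head v (by rw [hdecA]; simp)
    have hBlt : ∀ y ∈ B, y < v := by
      intro y hy
      rcases Nat.lt_or_ge i lam.length with hlt | hge
      · have hBeq : B = lam.getD i 0 :: lam.drop (i+1) := by
          rw [hB, show (i-1)+1 = i by omega, List.drop_eq_getElem_cons hlt,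
            List.getD_eq_getElem _ _ hlt]
        have hgdi : lam.getD i 0 < v := by
          rcases hcond with h | h
          · omega
          · omega
        have hpwB : List.Pairwise (· ≥ ·) (v :: B) := by
          have h1 : List.Pairwise (· ≥ ·) (A ++ v :: B) := hdecA ▸ hpw
          rw [List.pairwise_append] at h1
          exact h1.2.1
        rw [hBeq] at hy
        rcases List.mem_cons.mp hy with rfl | hy'
        · exact hgdi
        · have hpwB2 : List.Pairwise (· ≥ ·) (lam.getD i 0 :: lam.drop (i+1)) := by
            rw [← hBeq]
            exact (List.pairwise_cons.mp hpwB).2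
          have := List.rel_of_pairwise_cons hpwB2 hy'
          omega
      · have hBnil : B = [] := by
          rw [hB, show (i-1)+1 = i by omega, show i = lam.length by omega, List.drop_length]
        rw [hBnil] at hy
        simp at hy
    have hdown : downAt i lam = A ++ (v-1) :: B := by
      rw [hdecA, downAt_decomp hAlen hApos hBpos, if_neg (by omega)]
    have hDpos : ∀ y ∈ downAt i lam, 0 < y := by
      rw [hdown]
      intro y hy
      rcases List.mem_append.mp hy with h | h
      · exact hApos y h
      · rcases List.mem_cons.mp h with rfl | h'
        · omega
        · exact hBpos y h'
    have hdsum : (downAt i lam).sum = lam.sum - 1 := by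
      rw [hdown]
      simp only [List.sum_append, List.sum_cons]
      omega
    have hdlen : (downAt i lam).length = lam.length := by
      rw [hdown]
      conv_rhs => rw [hdecA]
      simp
    have hdhead : (downAt i lam).headD 0 = lam.headD 0 := by
      rw [hdown, hheadA]
      exact headD_append_ne_nil hAne 0
    have hF1D : lam.headD 0 + lam.length ≤ lam.sum := by
      have h := head_add_length_le hDpos
      rw [hdsum, hdlen, hdhead] at h
      omega
    have hwsum : (subHat 1 (downAt i lam)).sum = lam.sum - 1 - lam.length := by
      have h := subHat_one_sum hDpos
      rw [hdsum, hdlen] at h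
      omega
    have hwhead : (subHat 1 (downAt i lam)).headD 0 = lam.headD 0 - 1 := by
      rw [subHat_one_headD' (by rw [hdhead]; omega), hdhead]
    rw [hη lam, hη (downAt i lam), hη (subHat 1 lam), hη (subHat 1 (downAt i lam))]
    rw [hdsum, hdhead, husum, huhead, hwsum, hwhead]
    have hd' : ((-1:ℤ))^(lam.sum - 1 - lam.headD 0) = -(-1:ℤ)^(lam.sum - lam.headD 0) := by
      rw [show lam.sum - lam.headD 0 = (lam.sum - 1 - lam.headD 0) + 1 by omega, pow_succ]
      ring
    have hu' : ((-1:ℤ))^(lam.length + 1) * (-1:ℤ)^(lam.sum - lam.length - (lam.headD 0 - 1))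
        = (-1:ℤ)^(lam.sum - lam.headD 0) := by
      rw [show lam.sum - lam.headD 0
          = (lam.sum - lam.length - (lam.headD 0 - 1)) + (lam.length - 1) by omega,
        show lam.length + 1 = (lam.length - 1) + 2 by omega, pow_add, pow_add]
      ring
    have hw' : ((-1:ℤ))^(lam.length + 1)
          * (-1:ℤ)^(lam.sum - 1 - lam.length - (lam.headD 0 - 1))
        = -(-1:ℤ)^(lam.sum - lam.headD 0) := by
      rw [show lam.sum - lam.headD 0
          = (lam.sum - 1 - lam.length - (lam.headD 0 - 1)) + lam.length by omega,
        pow_add, pow_succ]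
      ring
    linear_combination ((-1:ℤ)^(lam.sum - lam.headD 0)) * hstar
      + (f (downAt i lam)) * hd'
      - ((2 * (v : ℤ) + (lam.length : ℤ) - (i : ℤ) - 1)
          * f (subHat 1 lam)) * hu'
      - ((2 * (v : ℤ) + (lam.length : ℤ) - (i : ℤ) - 2)
          * f (subHat 1 (downAt i lam))) * hw'
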